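/- arXiv:1201.3040 — 5 statements merged into one kernel-verified Lean document; each statement's English description precedes it below -/
import Mathlib

section
/- For subsets S_1,…,S_k of the monomials of A[ℝ≥0^d], the intersection of the ideals (S_i)R equals the ideal generated by all least common multiples lcm(f_1,…,f_k) where f_i ∈ S_i. Here lcm(X^{r_1},…,X^{r_k}) = X^p with p_j = max_i r_{i,j}. -/
open scoped NNReal ENNReal

/-- The semigroup ring `R = A[ℝ≥0 ^ d]`. -/
abbrev SemiRng (A : Type*) [CommRing A] (d : ℕ) : Type _ :=
  AddMonoidAlgebra A (Fin d → ℝ≥0)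

/-- The monomial `X^r` of `A[ℝ≥0 ^ d]`. -/
noncomputable def mono (A : Type*) [CommRing A] {d : ℕ} (r : Fin d → ℝ≥0) : SemiRng A d :=
  AddMonoidAlgebra.single r 1

/-- An ideal of `A[ℝ≥0 ^ d]` is a monomial ideal if it is generated by a set of monomials. -/
def IsMonomialIdeal {A : Type*} [CommRing A] {d : ℕ} (I : Ideal (SemiRng A d)) : Prop :=
  ∃ E : Set (Fin d → ℝ≥0), I = Ideal.span (mono A '' E)

/-- The set of (exponent vectors of) monomials contained in an ideal. -/
def monSet (A : Type*) [CommRing A] {d : ℕ} (I : Ideal (SemiRng A d)) :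
    Set (Fin d → ℝ≥0) :=
  {r | mono A r ∈ I}

/-- `geq e r a` means `r ≥_e a`: `r ≥ a` if `e = 0` (false), `r > a` if `e = 1` (true);
no finite `r` satisfies `r ≥_e ∞`. -/
def geq (e : Bool) (r : ℝ≥0) (a : ℝ≥0∞) : Prop :=
  if e then a < (r : ℝ≥0∞) else a ≤ (r : ℝ≥0∞)

/-- The ideal `J_{i,a,e}` generated by the pure powers `X_i^r` with `r ≥_e a`. -/
noncomputable def Jsingle (A : Type*) [CommRing A] {d : ℕ} (i : Fin d) (a : ℝ≥0∞)
    (e : Bool) : Ideal (SemiRng A d) :=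
  Ideal.span {f | ∃ r : ℝ≥0, geq e r a ∧ f = mono A (Pi.single i r)}

/-- The ideal `J_{a,e}` generated by all pure powers `X_i^r` with `r ≥_{e i} a i`. -/
noncomputable def Jideal (A : Type*) [CommRing A] {d : ℕ} (a : Fin d → ℝ≥0∞)
    (e : Fin d → Bool) : Ideal (SemiRng A d) :=
  Ideal.span {f | ∃ (i : Fin d) (r : ℝ≥0), geq (e i) r (a i) ∧ f = mono A (Pi.single i r)}

/-- The ideal `I_{a,e}` generated by all monomials `X^r` with `r i ≥_{e i} a i` for all `i`. -/
noncomputable def Iideal (A : Type*) [CommRing A] {d : ℕ} (a : Fin d → ℝ≥0∞)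
    (e : Fin d → Bool) : Ideal (SemiRng A d) :=
  Ideal.span {f | ∃ r : Fin d → ℝ≥0, (∀ i, geq (e i) (r i) (a i)) ∧ f = mono A r}

/-- A monomial ideal is m-irreducible if whenever it is an intersection of two monomial
ideals, it equals one of them. -/
def MIrred {A : Type*} [CommRing A] {d : ℕ} (I : Ideal (SemiRng A d)) : Prop :=
  ∀ J K : Ideal (SemiRng A d), IsMonomialIdeal J → IsMonomialIdeal K →
    I = J ⊓ K → I = J ∨ I = K

variable {A : Type*} [CommRing A] [Nontrivial A] {d : ℕ}

lemma mem_span_mono_iff (E : Set (Fin d → ℝ≥0)) (x : SemiRng A d) :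
    x ∈ Ideal.span (mono A '' E) ↔ ∀ m ∈ x.coeff.support, ∃ e ∈ E, e ≤ m := by
  have : mono A (d := d) = AddMonoidAlgebra.of' A (Fin d → ℝ≥0) := rfl
  rw [this, AddMonoidAlgebra.mem_ideal_span_of'_image]
  refine forall₂_congr fun m _ => exists_congr fun e => and_congr_right fun _ => ?_
  constructor
  · rintro ⟨c, rfl⟩ i; simp [le_add_self]
  · intro h; exact ⟨m - e, funext fun i => (tsub_add_cancel_of_le (h i)).symm⟩

theorem stmt5 (k : ℕ) (hk : 0 < k) (S : Fin k → Set (Fin d → ℝ≥0)) :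
    (⨅ i, Ideal.span (mono A '' S i)) =
      Ideal.span (mono A ''
        {p | ∃ f : Fin k → Fin d → ℝ≥0, (∀ i, f i ∈ S i) ∧
          p = fun j => Finset.univ.sup fun i => f i j}) := by
  ext x
  simp only [Ideal.mem_iInf, mem_span_mono_iff]
  constructor
  · intro h m hm
    choose f hfS hfle using fun i => h i m hm
    refine ⟨_, ⟨f, hfS, rfl⟩, fun j => Finset.sup_le fun i _ => hfle i j⟩
  · rintro h i m hm
    obtain ⟨p, ⟨f, hfS, rfl⟩, hle⟩ := h m hm
    exact ⟨f i, hfS i, fun j =>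
      le_trans (Finset.le_sup (f := fun i => f i j) (Finset.mem_univ i)) (hle j)⟩
end

section
/- Let G be a set of monomials of R = A[ℝ≥0^d], I = (G)R, and let X^b ∈ I be a monomial. For j = 1,…,d set I_j = (G ∪ {X_j^{b_j}})R. Then I = ⋂_{j=1}^d I_j. -/
open scoped NNReal ENNReal

variable {A : Type*} [CommRing A] [Nontrivial A] {d : ℕ}


omit [Nontrivial A] in
lemma mem_span_iff (G : Set (Fin d → ℝ≥0)) (x : SemiRng A d) :
    x ∈ Ideal.span (mono A '' G) ↔ ∀ m ∈ x.coeff.support, ∃ g ∈ G, g ≤ m := by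
  have : mono A '' G = AddMonoidAlgebra.of' A (Fin d → ℝ≥0) '' G := by
    rfl
  rw [this, AddMonoidAlgebra.mem_ideal_span_of'_image]
  refine forall₂_congr fun m _ => ⟨?_, ?_⟩
  · rintro ⟨g, hg, s, rfl⟩; exact ⟨g, hg, le_add_self⟩
  · rintro ⟨g, hg, h⟩; exact ⟨g, hg, m - g, (tsub_add_cancel_of_le h).symm⟩

lemma mono_mem_span_iff (G : Set (Fin d → ℝ≥0)) (r : Fin d → ℝ≥0) :
    mono A r ∈ Ideal.span (mono A '' G) ↔ ∃ g ∈ G, g ≤ r := by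
  rw [mem_span_iff]
  constructor
  · intro h
    exact h r (by simp [mono, AddMonoidAlgebra.coeff_single, Finsupp.support_single_ne_zero _ (one_ne_zero)])
  · intro h m hm
    have : m = r := by
      have := Finsupp.support_single_subset hm
      simpa using this
    exact this ▸ h

theorem stmt6 (G : Set (Fin d → ℝ≥0)) (b : Fin d → ℝ≥0)
    (hb : mono A b ∈ Ideal.span (mono A '' G)) :
    Ideal.span (mono A '' G) =
      ⨅ j : Fin d, Ideal.span (mono A '' (G ∪ {Pi.single j (b j)})) := by
  obtain ⟨g0, hg0, hg0le⟩ := (mono_mem_span_iff G b).mp hb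
  refine le_antisymm (le_iInf fun j => Ideal.span_mono (Set.image_mono Set.subset_union_left)) ?_
  intro x hx
  rw [mem_span_iff]
  intro m hm
  by_cases h : ∀ j, b j ≤ m j
  · exact ⟨g0, hg0, hg0le.trans h⟩
  · push_neg at h
    obtain ⟨j, hj⟩ := h
    obtain ⟨g, hg, hgle⟩ := (mem_span_iff _ x).mp (Ideal.mem_iInf.mp hx j) m hm
    rcases hg with hg | hg
    · exact ⟨g, hg, hgle⟩
    · simp only [Set.mem_singleton_iff] at hg
      subst hg
      have := hgle j
      simp only [Pi.single_eq_same] at this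
      exact absurd this hj.not_ge
end

section
/- Any finite intersection ⋂_{t=1}^k J_{i_t,α_t,ε_t} of ideals generated by pure powers of single variables has the form I_{β,δ} for some β ∈ (ℝ≥0 ∪ {∞})^d and δ ∈ {0,1}^d. -/
open scoped NNReal ENNReal

section Aux

variable {A : Type*} [CommRing A] [Nontrivial A] {d : ℕ}

lemma mono_mul (r s : Fin d → ℝ≥0) : mono A r * mono A s = mono A (r + s) := by
  simp [mono, AddMonoidAlgebra.single_mul_single]

lemma mem_span_of_support {E : Set (Fin d → ℝ≥0)} {f : SemiRng A d}
    (h : ∀ s ∈ f.coeff.support, s ∈ E) : f ∈ Ideal.span (mono A '' E) := by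
  classical
  rw [← f.sum_coeff_single, Finsupp.sum]
  refine Submodule.sum_mem _ fun s hs => ?_
  have hone : (AddMonoidAlgebra.single s (f.coeff s) : SemiRng A d)
      = AddMonoidAlgebra.single (0 : Fin d → ℝ≥0) (f.coeff s) * mono A s := by
    simp [mono, AddMonoidAlgebra.single_mul_single]
  rw [hone]
  exact Ideal.mul_mem_left _ _ (Ideal.subset_span ⟨s, h s hs, rfl⟩)

lemma support_dominated_of_mem_span {E : Set (Fin d → ℝ≥0)} {f : SemiRng A d}
    (hf : f ∈ Ideal.span (mono A '' E)) :
    ∀ s ∈ f.coeff.support, ∃ e ∈ E, ∃ u, s = e + u := by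
  classical
  refine Submodule.span_induction (p := fun g _ => ∀ s ∈ g.coeff.support, ∃ e ∈ E, ∃ u, s = e + u)
    ?_ ?_ ?_ ?_ hf
  · rintro _ ⟨e, he, rfl⟩ s hs
    have : s = e := by
      have := Finsupp.support_single_subset hs
      simpa [mono] using this
    exact ⟨e, he, 0, by simp [this]⟩
  · simp
  · intro x y _ _ hx hy s hs
    rcases Finset.mem_union.1 (Finsupp.support_add hs) with h | h
    · exact hx s h
    · exact hy s h
  · intro a x _ hx s hs
    rw [smul_eq_mul] at hs
    have := AddMonoidAlgebra.support_coeff_mul_subset a x hs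
    rcases Finset.mem_add.1 this with ⟨p, hp, q, hq, rfl⟩
    obtain ⟨e, he, u, rfl⟩ := hx q hq
    exact ⟨e, he, u + p, by abel⟩

lemma mono_mem_span {E : Set (Fin d → ℝ≥0)} {v s : Fin d → ℝ≥0}
    (hv : v ∈ E) (hvs : v ≤ s) : mono A s ∈ Ideal.span (mono A '' E) := by
  have : mono A s = mono A (s - v) * mono A v := by
    rw [mono_mul, tsub_add_cancel_of_le hvs]
  rw [this]
  exact Ideal.mul_mem_left _ _ (Ideal.subset_span ⟨v, hv, rfl⟩)

lemma geq_upward {e : Bool} {a : ℝ≥0∞} {x y : ℝ≥0} (h : geq e x a) (hxy : x ≤ y) :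
    geq e y a := by
  cases e <;> simp only [geq, if_true, if_false, Bool.false_eq_true] at h ⊢
  · exact h.trans (ENNReal.coe_le_coe.2 hxy)
  · exact h.trans_le (ENNReal.coe_le_coe.2 hxy)

lemma Iideal_eq_span (a : Fin d → ℝ≥0∞) (e : Fin d → Bool) :
    Iideal A a e = Ideal.span (mono A '' {r | ∀ i, geq (e i) (r i) (a i)}) := by
  unfold Iideal
  congr 1
  ext f
  constructor
  · rintro ⟨r, hr, rfl⟩; exact ⟨r, hr, rfl⟩
  · rintro ⟨r, hr, rfl⟩; exact ⟨r, hr, rfl⟩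

lemma Jsingle_eq_span (j : Fin d) (a : ℝ≥0∞) (e : Bool) :
    Jsingle A j a e
      = Ideal.span (mono A '' {v | ∃ r, geq e r a ∧ v = Pi.single j r}) := by
  unfold Jsingle
  congr 1
  ext f
  constructor
  · rintro ⟨r, hr, rfl⟩; exact ⟨Pi.single j r, ⟨r, hr, rfl⟩, rfl⟩
  · rintro ⟨v, ⟨r, hr, rfl⟩, rfl⟩; exact ⟨r, hr, rfl⟩

lemma pi_single_le (j : Fin d) (s : Fin d → ℝ≥0) : Pi.single j (s j) ≤ s := by
  intro x
  by_cases h : x = j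
  · subst h; simp
  · simp [Pi.single_eq_of_ne h]

end Aux

variable {A : Type*} [CommRing A] [Nontrivial A] {d : ℕ}

theorem stmt15 (k : ℕ) (hk : 1 ≤ k) (i : Fin k → Fin d)
    (α : Fin k → ℝ≥0∞) (ε : Fin k → Bool) :
    ∃ (β : Fin d → ℝ≥0∞) (δ : Fin d → Bool),
      (⨅ t, Jsingle A (i t) (α t) (ε t)) = Iideal A β δ := by
  classical
  set β : Fin d → ℝ≥0∞ := fun j => (Finset.univ.filter fun t => i t = j).sup α with hβ
  set δ : Fin d → Bool := fun j => decide (∃ t, i t = j ∧ α t = β j ∧ ε t = true) with hδ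
  refine ⟨β, δ, ?_⟩
  have key : ∀ (j : Fin d) (x : ℝ≥0),
      geq (δ j) x (β j) ↔ ∀ t, i t = j → geq (ε t) x (α t) := by
    intro j x
    have hle : ∀ t, i t = j → α t ≤ β j := fun t ht =>
      Finset.le_sup (Finset.mem_filter.2 ⟨Finset.mem_univ t, ht⟩)
    constructor
    · intro h t ht
      have h1 : α t ≤ β j := hle t ht
      have h2 : β j ≤ (x : ℝ≥0∞) := by
        cases hd : δ j <;> rw [hd] at h <;>
          simp only [geq, if_true, if_false, Bool.false_eq_true] at h
        · exact h
        · exact h.le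
      cases he : ε t <;> simp only [geq, if_true, if_false, Bool.false_eq_true]
      · exact h1.trans h2
      · rcases lt_or_eq_of_le h1 with h3 | h3
        · exact h3.trans_le h2
        · have hdt : δ j = true := by
            simp only [hδ, decide_eq_true_iff]; exact ⟨t, ht, h3, he⟩
          rw [hdt] at h
          simp only [geq, if_true] at h
          rw [h3]; exact h
    · intro h
      by_cases hne : (Finset.univ.filter fun t => i t = j).Nonempty
      · obtain ⟨t0, ht0, hsup⟩ := Finset.exists_mem_eq_sup _ hne α
        have hit0 : i t0 = j := (Finset.mem_filter.1 ht0).2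
        cases hd : δ j <;> simp only [geq, if_true, if_false, Bool.false_eq_true]
        · -- δ j = false : show β j ≤ x
          have hef : ε t0 = false := by
            by_contra hc
            have hdt : δ j = true := by
              simp only [hδ, decide_eq_true_iff]
              exact ⟨t0, hit0, hsup.symm, eq_true_of_ne_false hc⟩
            rw [hdt] at hd; exact absurd hd (by simp)
          have h0 := h t0 hit0
          rw [hef] at h0
          simp only [geq, if_false, Bool.false_eq_true] at h0
          have hbe : β j = α t0 := hsup
          rw [hbe]; exact h0
        · -- δ j = true : show β j < x
          have hex : ∃ t, i t = j ∧ α t = β j ∧ ε t = true := by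
            have hd' := hd
            simp only [hδ, decide_eq_true_iff] at hd'
            exact hd'
          obtain ⟨t1, ht1, ha1, he1⟩ := hex
          have h1 := h t1 ht1
          rw [he1] at h1
          simp only [geq, if_true] at h1
          rw [← ha1]; exact h1
      · have hb0 : β j = 0 := by
          have he0 : (Finset.univ.filter fun t => i t = j) = ∅ :=
            Finset.not_nonempty_iff_eq_empty.1 hne
          simp only [hβ, he0, Finset.sup_empty, bot_eq_zero]
        have hd0 : δ j = false := by
          simp only [hδ, decide_eq_false_iff_not]
          rintro ⟨t, ht, -, -⟩
          exact hne ⟨t, Finset.mem_filter.2 ⟨Finset.mem_univ t, ht⟩⟩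
        rw [hd0, hb0]
        simp [geq]
  have hS : ∀ r : Fin d → ℝ≥0,
      (∀ j, geq (δ j) (r j) (β j)) ↔ (∀ t, geq (ε t) (r (i t)) (α t)) := by
    intro r
    constructor
    · intro h t
      exact (key (i t) (r (i t))).1 (h (i t)) t rfl
    · intro h j
      refine (key j (r j)).2 fun t ht => ?_
      rw [← ht]; exact h t
  rw [Iideal_eq_span]
  apply le_antisymm
  · intro f hf
    rw [Submodule.mem_iInf] at hf
    apply mem_span_of_support
    intro s hs
    refine (hS s).2 fun t => ?_
    have hft := hf t
    rw [Jsingle_eq_span] at hft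
    obtain ⟨v, ⟨r, hr, rfl⟩, u, rfl⟩ := support_dominated_of_mem_span hft s hs
    refine geq_upward hr ?_
    simp
  · rw [Ideal.span_le]
    rintro _ ⟨s, hsS, rfl⟩
    have hall := (hS s).1 hsS
    rw [SetLike.mem_coe, Submodule.mem_iInf]
    intro t
    rw [Jsingle_eq_span]
    exact mono_mem_span ⟨s (i t), hall t, rfl⟩ (pi_single_le (i t) s)
end

section
/- A monomial ideal I of A[ℝ≥0^d] admits a finite m-irreducible decomposition (a finite intersection of m-irreducible monomial ideals) if and only if I is a finite sum of ideals of the form I_{α,ε} = ({X^r : r_i ≥_{ε_i} α_i for all i})R with α ∈ (ℝ≥0 ∪ {∞})^d, ε ∈ {0,1}^d. -/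
open scoped NNReal ENNReal

/-! ### Auxiliary development -/

section Aux

variable (A : Type*) [CommRing A] [Nontrivial A] {d : ℕ}

/-- upward closure -/
def upSet {d : ℕ} (E : Set (Fin d → ℝ≥0)) : Set (Fin d → ℝ≥0) :=
  {r | ∃ s ∈ E, s ≤ r}

def UpClosed {d : ℕ} (U : Set (Fin d → ℝ≥0)) : Prop :=
  ∀ ⦃x y : Fin d → ℝ≥0⦄, x ≤ y → x ∈ U → y ∈ U

lemma subset_upSet {E : Set (Fin d → ℝ≥0)} : E ⊆ upSet E :=
  fun r hr => ⟨r, hr, le_rfl⟩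

lemma upClosed_upSet (E : Set (Fin d → ℝ≥0)) : UpClosed (upSet E) := by
  rintro x y hxy ⟨s, hs, hsx⟩; exact ⟨s, hs, hsx.trans hxy⟩

lemma upSet_eq_self {U : Set (Fin d → ℝ≥0)} (h : UpClosed U) : upSet U = U :=
  Set.Subset.antisymm (fun r ⟨s, hs, hsr⟩ => h hsr hs) subset_upSet

lemma upSet_upSet (E : Set (Fin d → ℝ≥0)) : upSet (upSet E) = upSet E :=
  upSet_eq_self (upClosed_upSet E)

/-- The ideal of all `f` whose support lies in the upward closure of `E`. -/
noncomputable def idealOf (E : Set (Fin d → ℝ≥0)) : Ideal (SemiRng A d) where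
  carrier := {f | ∀ r ∈ f.coeff.support, r ∈ upSet E}
  zero_mem' := by simp
  add_mem' := by
    intro f g hf hg r hr
    rcases Finset.mem_union.mp (Finsupp.support_add hr) with h | h
    · exact hf r h
    · exact hg r h
  smul_mem' := by
    intro c f hf r hr
    rw [smul_eq_mul] at hr
    rcases Finset.mem_add.mp (AddMonoidAlgebra.support_coeff_mul_subset c f hr) with ⟨s, hs, t, ht, rfl⟩
    rcases hf t ht with ⟨u, hu, hut⟩
    exact ⟨u, hu, hut.trans (by simpa using add_le_add_left (le_refl t) s)⟩

lemma mem_idealOf {E : Set (Fin d → ℝ≥0)} {f : SemiRng A d} :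
    f ∈ idealOf A E ↔ ∀ r ∈ f.coeff.support, r ∈ upSet E := Iff.rfl

lemma mono_mem_idealOf {E : Set (Fin d → ℝ≥0)} {r : Fin d → ℝ≥0} :
    mono A r ∈ idealOf A E ↔ r ∈ upSet E := by
  rw [mem_idealOf]
  constructor
  · intro h
    exact h r (by simp [mono, AddMonoidAlgebra.coeff_single, Finsupp.support_single_ne_zero r one_ne_zero])
  · intro h s hs
    have : s = r := by
      simpa [mono, AddMonoidAlgebra.coeff_single,
        Finsupp.support_single_ne_zero r one_ne_zero] using hs
    rwa [this]

lemma span_mono_eq_idealOf (E : Set (Fin d → ℝ≥0)) :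
    Ideal.span (mono A '' E) = idealOf A E := by
  apply le_antisymm
  · rw [Ideal.span_le]
    rintro f ⟨s, hs, rfl⟩
    exact (mono_mem_idealOf A).mpr (subset_upSet hs)
  · intro f hf
    have : f = ∑ r ∈ f.coeff.support, AddMonoidAlgebra.single r (f.coeff r) :=
      (AddMonoidAlgebra.sum_coeff_single f).symm
    rw [this]
    refine Ideal.sum_mem _ fun r hr => ?_
    rcases hf r hr with ⟨s, hs, hsr⟩
    have key : AddMonoidAlgebra.single r (f.coeff r) =
        AddMonoidAlgebra.single (r - s) (f.coeff r) * mono A s := by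
      rw [mono, AddMonoidAlgebra.single_mul_single, mul_one, tsub_add_cancel_of_le hsr]
    rw [key]
    exact Ideal.mul_mem_left _ _ (Ideal.subset_span ⟨s, hs, rfl⟩)

lemma isMonomialIdeal_iff {I : Ideal (SemiRng A d)} :
    IsMonomialIdeal I ↔ ∃ U, UpClosed U ∧ I = idealOf A U := by
  constructor
  · rintro ⟨E, rfl⟩
    refine ⟨upSet E, upClosed_upSet E, ?_⟩
    rw [span_mono_eq_idealOf]
    apply Ideal.ext; intro f
    rw [mem_idealOf, mem_idealOf, upSet_upSet]
  · rintro ⟨U, _, rfl⟩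
    exact ⟨U, (span_mono_eq_idealOf A U).symm⟩

lemma monSet_idealOf {U : Set (Fin d → ℝ≥0)} (hU : UpClosed U) :
    monSet A (idealOf A U) = U := by
  ext r; rw [monSet, Set.mem_setOf_eq, mono_mem_idealOf, upSet_eq_self hU]

lemma idealOf_inj {U V : Set (Fin d → ℝ≥0)} (hU : UpClosed U) (hV : UpClosed V)
    (h : idealOf A U = idealOf A V) : U = V := by
  rw [← monSet_idealOf A hU, ← monSet_idealOf A hV, h]

lemma idealOf_iInf {ι : Sort*} (U : ι → Set (Fin d → ℝ≥0)) (hU : ∀ t, UpClosed (U t)) :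
    (⨅ t, idealOf A (U t)) = idealOf A (⋂ t, U t) := by
  apply Ideal.ext; intro f
  rw [Ideal.mem_iInf, mem_idealOf, upSet_eq_self (U := ⋂ t, U t)
    (fun x y hxy hx => Set.mem_iInter.mpr fun t => hU t hxy (Set.mem_iInter.mp hx t))]
  simp only [mem_idealOf]
  constructor
  · intro h r hr
    exact Set.mem_iInter.mpr fun t => by
      have := (h t) r hr
      rwa [upSet_eq_self (hU t)] at this
  · intro h t r hr
    rw [upSet_eq_self (hU t)]
    exact Set.mem_iInter.mp (h r hr) t

lemma upClosed_inter {U V : Set (Fin d → ℝ≥0)} (hU : UpClosed U) (hV : UpClosed V) :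
    UpClosed (U ∩ V) := fun _ _ hxy hx => ⟨hU hxy hx.1, hV hxy hx.2⟩

lemma idealOf_inf {U V : Set (Fin d → ℝ≥0)} (hU : UpClosed U) (hV : UpClosed V) :
    idealOf A U ⊓ idealOf A V = idealOf A (U ∩ V) := by
  apply Ideal.ext; intro f
  simp only [Submodule.mem_inf, mem_idealOf, upSet_eq_self hU, upSet_eq_self hV,
    upSet_eq_self (upClosed_inter hU hV), Set.mem_inter_iff]
  aesop

lemma idealOf_iSup {ι : Sort*} (U : ι → Set (Fin d → ℝ≥0)) :
    (⨆ t, idealOf A (U t)) = idealOf A (⋃ t, U t) := by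
  simp_rw [← span_mono_eq_idealOf, ← Ideal.span_iUnion, Set.image_iUnion]

end Aux

section Geq

variable (A : Type*) [CommRing A] [Nontrivial A] {d : ℕ}

lemma geq_mono {e : Bool} {r r' : ℝ≥0} {a : ℝ≥0∞} (h : geq e r a) (hrr : r ≤ r') :
    geq e r' a := by
  cases e <;> simp only [geq, if_true, if_false, Bool.false_eq_true] at *
  · exact h.trans (ENNReal.coe_le_coe.mpr hrr)
  · exact h.trans_le (ENNReal.coe_le_coe.mpr hrr)

/-- Every up-closed subset of `ℝ≥0` is a `geq`-set. -/
lemma upClosed_nnreal_geq (C : Set ℝ≥0) (hC : ∀ ⦃x y : ℝ≥0⦄, x ≤ y → x ∈ C → y ∈ C) :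
    ∃ (a : ℝ≥0∞) (e : Bool), ∀ r, r ∈ C ↔ geq e r a := by
  set a : ℝ≥0∞ := ⨅ (r : ℝ≥0) (_ : r ∈ C), (r : ℝ≥0∞) with ha
  by_cases hat : ∃ m ∈ C, (m : ℝ≥0∞) = a
  · rcases hat with ⟨m, hm, hma⟩
    refine ⟨a, false, fun r => ?_⟩
    simp only [geq, if_false, Bool.false_eq_true]
    constructor
    · intro hr
      exact iInf_le_of_le r (iInf_le_of_le hr le_rfl)
    · intro hr
      rw [← hma, ENNReal.coe_le_coe] at hr
      exact hC hr hm
    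
  · refine ⟨a, true, fun r => ?_⟩
    simp only [geq, if_true]
    constructor
    · intro hr
      refine lt_of_le_of_ne (iInf_le_of_le r (iInf_le_of_le hr le_rfl)) ?_
      intro h
      exact hat ⟨r, hr, h.symm⟩
    · intro hr
      by_contra hrC
      have hle : (r : ℝ≥0∞) ≤ a := le_iInf fun c => le_iInf fun hc => by
        by_contra hlt
        push_neg at hlt
        exact hrC (hC (by exact_mod_cast hlt.le) hc)
      exact absurd hr (not_lt.mpr hle)

end Geq

section Ideals

variable (A : Type*) [CommRing A] [Nontrivial A] {d : ℕ}

/-- The exponent set of `Iideal a e`. -/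
def Sae {d : ℕ} (a : Fin d → ℝ≥0∞) (e : Fin d → Bool) : Set (Fin d → ℝ≥0) :=
  {r | ∀ i, geq (e i) (r i) (a i)}

/-- The exponent set of `Jideal a e`. -/
def Tae {d : ℕ} (a : Fin d → ℝ≥0∞) (e : Fin d → Bool) : Set (Fin d → ℝ≥0) :=
  {v | ∃ i, geq (e i) (v i) (a i)}

lemma upClosed_Sae (a : Fin d → ℝ≥0∞) (e : Fin d → Bool) : UpClosed (Sae a e) :=
  fun x y hxy hx i => geq_mono (hx i) (hxy i)

lemma upClosed_Tae (a : Fin d → ℝ≥0∞) (e : Fin d → Bool) : UpClosed (Tae a e) := by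
  rintro x y hxy ⟨i, hi⟩; exact ⟨i, geq_mono hi (hxy i)⟩

lemma Iideal_eq (a : Fin d → ℝ≥0∞) (e : Fin d → Bool) :
    Iideal A a e = idealOf A (Sae a e) := by
  rw [← span_mono_eq_idealOf, Iideal]
  have : {f | ∃ r : Fin d → ℝ≥0, (∀ i, geq (e i) (r i) (a i)) ∧ f = mono A r}
      = mono A '' Sae a e := by
    ext f
    constructor
    · rintro ⟨r, hr, rfl⟩; exact ⟨r, hr, rfl⟩
    · rintro ⟨r, hr, rfl⟩; exact ⟨r, hr, rfl⟩
  rw [this]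

lemma pi_single_le_s17 {i : Fin d} {r : ℝ≥0} {v : Fin d → ℝ≥0} :
    Pi.single i r ≤ v ↔ r ≤ v i := by
  constructor
  · intro h; simpa using h i
  · intro h j
    rcases eq_or_ne j i with rfl | hj
    · simpa using h
    · simp [Pi.single_eq_of_ne hj]

lemma Jideal_eq (a : Fin d → ℝ≥0∞) (e : Fin d → Bool) :
    Jideal A a e = idealOf A (Tae a e) := by
  have : Jideal A a e =
      Ideal.span (mono A '' {v | ∃ (i : Fin d) (r : ℝ≥0), geq (e i) r (a i) ∧ v = Pi.single i r}) := by
    unfold Jideal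
    congr 1
    ext f
    constructor
    · rintro ⟨i, r, hr, rfl⟩; exact ⟨Pi.single i r, ⟨i, r, hr, rfl⟩, rfl⟩
    · rintro ⟨v, ⟨i, r, hr, rfl⟩, rfl⟩; exact ⟨i, r, hr, rfl⟩
  rw [this, span_mono_eq_idealOf]
  apply Ideal.ext; intro f
  rw [mem_idealOf, mem_idealOf, upSet_eq_self (upClosed_Tae a e)]
  have hup : upSet {v : Fin d → ℝ≥0 | ∃ (i : Fin d) (r : ℝ≥0), geq (e i) r (a i) ∧ v = Pi.single i r}
      = Tae a e := by
    ext v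
    constructor
    · rintro ⟨s, ⟨i, r, hr, rfl⟩, hsv⟩
      exact ⟨i, geq_mono hr (pi_single_le_s17.mp hsv)⟩
    · rintro ⟨i, hi⟩
      exact ⟨Pi.single i (v i), ⟨i, v i, hi, rfl⟩, pi_single_le_s17.mpr le_rfl⟩
  rw [hup]

lemma mirred_Jideal (a : Fin d → ℝ≥0∞) (e : Fin d → Bool) : MIrred (Jideal A a e) := by
  intro J K hJ hK hJK
  rcases (isMonomialIdeal_iff A).mp hJ with ⟨U, hU, rfl⟩
  rcases (isMonomialIdeal_iff A).mp hK with ⟨V, hV, rfl⟩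
  rw [Jideal_eq, idealOf_inf A hU hV] at hJK
  have hset : Tae a e = U ∩ V := idealOf_inj A (upClosed_Tae a e) (upClosed_inter hU hV) hJK
  by_contra hcon
  push_neg at hcon
  obtain ⟨h1, h2⟩ := hcon
  rw [Jideal_eq] at h1 h2
  have hU' : ¬ (Tae a e = U) := fun h => h1 (by rw [h])
  have hV' : ¬ (Tae a e = V) := fun h => h2 (by rw [h])
  have hTU : Tae a e ⊆ U := hset.le.trans Set.inter_subset_left
  have hTV : Tae a e ⊆ V := hset.le.trans Set.inter_subset_right
  obtain ⟨u, huU, huT⟩ := (Set.ssubset_iff_of_subset hTU).mp (hTU.ssubset_of_ne hU')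
  obtain ⟨v, hvV, hvT⟩ := (Set.ssubset_iff_of_subset hTV).mp (hTV.ssubset_of_ne hV')
  have hw : u ⊔ v ∈ Tae a e := by
    rw [hset]
    exact ⟨hU le_sup_left huU, hV le_sup_right hvV⟩
  obtain ⟨i, hi⟩ := hw
  rcases le_total (u i) (v i) with h | h
  · exact hvT ⟨i, by simpa [Pi.sup_apply, sup_eq_right.mpr h] using hi⟩
  · exact huT ⟨i, by simpa [Pi.sup_apply, sup_eq_left.mpr h] using hi⟩

end Ideals

section Classify

variable (A : Type*) [CommRing A] [Nontrivial A] {d : ℕ}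

lemma isMonomialIdeal_iInf {ι : Sort*} (K : ι → Ideal (SemiRng A d))
    (h : ∀ t, IsMonomialIdeal (K t)) : IsMonomialIdeal (⨅ t, K t) := by
  choose U hU hKU using fun t => (isMonomialIdeal_iff A).mp (h t)
  refine (isMonomialIdeal_iff A).mpr ⟨⋂ t, U t, ?_, ?_⟩
  · intro x y hxy hx
    exact Set.mem_iInter.mpr fun t => hU t hxy (Set.mem_iInter.mp hx t)
  · simp_rw [hKU]
    exact idealOf_iInf A U hU

lemma fin_iInf_succ {α : Type*} [CompleteLattice α] {k : ℕ} (K : Fin (k + 1) → α) :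
    ⨅ t, K t = K 0 ⊓ ⨅ t : Fin k, K t.succ := by
  apply le_antisymm
  · exact le_inf (iInf_le K 0) (le_iInf fun t => iInf_le K t.succ)
  · refine le_iInf fun t => ?_
    induction t using Fin.cases with
    | zero => exact inf_le_left
    | succ j => exact le_trans inf_le_right (iInf_le (fun t : Fin k => K t.succ) j)

lemma mirred_iInf {I : Ideal (SemiRng A d)} (hI : MIrred I) :
    ∀ (k : ℕ) (K : Fin (k + 1) → Ideal (SemiRng A d)), (∀ t, IsMonomialIdeal (K t)) →
      I = ⨅ t, K t → ∃ t, I = K t := by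
  intro k
  induction k with
  | zero =>
    intro K _ hIK
    refine ⟨0, hIK.trans (le_antisymm (iInf_le _ 0)
      (le_iInf fun t => le_of_eq (congrArg K (Fin.fin_one_eq_zero t).symm)))⟩
  | succ k ih =>
    intro K hmon hIK
    rw [fin_iInf_succ K] at hIK
    rcases hI _ _ (hmon 0) (isMonomialIdeal_iInf A (fun t : Fin (k+1) => K t.succ) (fun t => hmon t.succ)) hIK with h | h
    · exact ⟨0, h⟩
    · obtain ⟨t, ht⟩ := ih (fun t => K t.succ) (fun t => hmon t.succ) h
      exact ⟨t.succ, ht⟩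

lemma classify {I : Ideal (SemiRng A d)} (hd : 0 < d) (hmon : IsMonomialIdeal I)
    (hirr : MIrred I) : ∃ (a : Fin d → ℝ≥0∞) (e : Fin d → Bool), I = Jideal A a e := by
  obtain ⟨U, hU, rfl⟩ := (isMonomialIdeal_iff A).mp hmon
  set C : Fin d → Set ℝ≥0 := fun i => {s | ∀ w : Fin d → ℝ≥0, s ≤ w i → w ∈ U} with hC
  have hCup : ∀ i, ∀ ⦃x y : ℝ≥0⦄, x ≤ y → x ∈ C i → y ∈ C i := by
    intro i x y hxy hx w hw
    exact hx w (hxy.trans hw)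
  choose a e hae using fun i => upClosed_nnreal_geq (C i) (hCup i)
  refine ⟨a, e, ?_⟩
  rw [Jideal_eq]
  have hUT : U = Tae a e := by
    apply Set.Subset.antisymm
    · -- U ⊆ Tae a e
      intro u hu
      by_contra huT
      have hnotC : ∀ i, u i ∉ C i := by
        intro i hi
        exact huT ⟨i, (hae i (u i)).mp hi⟩
      -- decompose U
      set W : Fin d → Set (Fin d → ℝ≥0) := fun i => U ∪ {v | u i ≤ v i} with hW
      have hWup : ∀ i, UpClosed (W i) := by
        rintro i x y hxy (hx | hx)
        · exact Or.inl (hU hxy hx)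
        · exact Or.inr (le_trans hx (hxy i))
      have hUW : U = ⋂ i, W i := by
        apply Set.Subset.antisymm
        · exact fun v hv => Set.mem_iInter.mpr fun i => Or.inl hv
        · intro v hv
          by_cases hvU : v ∈ U
          · exact hvU
          · refine hU (y := v) (fun i => ?_) hu
            rcases Set.mem_iInter.mp hv i with h | h
            · exact absurd h hvU
            · exact h
      obtain ⟨k, rfl⟩ : ∃ k, d = k + 1 := ⟨d - 1, (Nat.succ_pred_eq_of_pos hd).symm⟩
      have hIW : idealOf A U = ⨅ i, idealOf A (W i) := by
        rw [idealOf_iInf A W hWup, ← hUW]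
      obtain ⟨i, hi⟩ := mirred_iInf A hirr _ (fun i => idealOf A (W i))
        (fun i => (isMonomialIdeal_iff A).mpr ⟨W i, hWup i, rfl⟩) hIW
      have hUWi : U = W i := idealOf_inj A hU (hWup i) hi
      refine hnotC i (fun w hw => ?_)
      have : w ∈ W i := Or.inr hw
      rwa [← hUWi] at this
    · -- Tae a e ⊆ U
      rintro v ⟨i, hi⟩
      have : v i ∈ C i := (hae i (v i)).mpr hi
      exact this v le_rfl
  rw [hUT]

end Classify

section Main

lemma iInter_iUnion_distrib' {X ι κ : Type*} (C : ι → κ → Set X) :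
    ⋂ t, ⋃ i, C t i = ⋃ φ : ι → κ, ⋂ t, C t (φ t) := by
  ext v
  simp only [Set.mem_iInter, Set.mem_iUnion]
  constructor
  · intro h
    choose φ hφ using h
    exact ⟨φ, fun t => hφ t⟩
  · rintro ⟨φ, hφ⟩ t
    exact ⟨φ t, hφ t⟩

lemma iUnion_iInter_distrib' {X ι κ : Type*} (C : ι → κ → Set X) :
    ⋃ t, ⋂ i, C t i = ⋂ φ : ι → κ, ⋃ t, C t (φ t) := by
  ext v
  simp only [Set.mem_iInter, Set.mem_iUnion]
  constructor
  · rintro ⟨t, ht⟩ φ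
    exact ⟨t, ht (φ t)⟩
  · intro h
    by_contra hc
    push_neg at hc
    choose φ hφ using hc
    obtain ⟨t, ht⟩ := h φ
    exact hφ t ht

end Main

variable {A : Type*} [CommRing A] [Nontrivial A] {d : ℕ}

theorem stmt17 (I : Ideal (SemiRng A d)) (hI : IsMonomialIdeal I) :
    (∃ (k : ℕ) (J : Fin k → Ideal (SemiRng A d)),
        (∀ t, IsMonomialIdeal (J t)) ∧ (∀ t, MIrred (J t)) ∧ I = ⨅ t, J t) ↔
      (∃ (k : ℕ) (a : Fin k → Fin d → ℝ≥0∞) (e : Fin k → Fin d → Bool),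
        I = ⨆ t, Iideal A (a t) (e t)) := by
  constructor
  · rintro ⟨k, J, hmonJ, hirrJ, hIeq⟩
    rcases Nat.eq_zero_or_pos d with hd | hd
    · -- degenerate case d = 0
      subst hd
      have hImon : IsMonomialIdeal I := by
        rw [hIeq]; exact isMonomialIdeal_iInf A J hmonJ
      obtain ⟨U, hU, hIU⟩ := (isMonomialIdeal_iff A).mp hImon
      by_cases h0 : (fun _ => 0 : Fin 0 → ℝ≥0) ∈ U
      · have hUuniv : U = Set.univ := by
          ext v
          simp only [Set.mem_univ, iff_true]
          rwa [Subsingleton.elim v (fun _ => 0)]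
        refine ⟨1, fun _ _ => 0, fun _ _ => false, ?_⟩
        have hSae : Sae (fun _ : Fin 0 => (0 : ℝ≥0∞)) (fun _ => false) = Set.univ := by
          ext v
          simp only [Set.mem_univ, iff_true, Sae, Set.mem_setOf_eq]
          exact fun i => i.elim0
        rw [hIU, hUuniv, iSup_const, Iideal_eq, hSae]
      · have hUempty : U = ∅ := by
          ext v
          simp only [Set.mem_empty_iff_false, iff_false]
          intro hv
          rw [Subsingleton.elim v (fun _ => 0)] at hv
          exact h0 hv
        refine ⟨0, Fin.elim0, Fin.elim0, ?_⟩
        rw [hIU, hUempty, iSup_of_empty, ← span_mono_eq_idealOf]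
        simp [Ideal.span_eq_bot]
    · -- main case d ≥ 1
      choose a e hae using fun t => classify A hd (hmonJ t) (hirrJ t)
      have h1 : I = idealOf A (⋂ t, Tae (a t) (e t)) := by
        rw [hIeq]
        simp_rw [hae, Jideal_eq]
        exact idealOf_iInf A (fun t => Tae (a t) (e t)) (fun t => upClosed_Tae _ _)
      have h2 : (⋂ t, Tae (a t) (e t)) =
          ⋃ φ : Fin k → Fin d, ⋂ t,
            {v : Fin d → ℝ≥0 | geq (e t (φ t)) (v (φ t)) (a t (φ t))} := by
        rw [← iInter_iUnion_distrib' (fun t i => {v : Fin d → ℝ≥0 | geq (e t i) (v i) (a t i)})]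
        refine Set.iInter_congr fun t => ?_
        ext v
        simp only [Tae, Set.mem_setOf_eq, Set.mem_iUnion]
      set D : (Fin k → Fin d) → Fin d → Set ℝ≥0 :=
        fun φ i => {s | ∀ t, φ t = i → geq (e t i) s (a t i)} with hD
      have hDup : ∀ φ i, ∀ ⦃x y : ℝ≥0⦄, x ≤ y → x ∈ D φ i → y ∈ D φ i := by
        intro φ i x y hxy hx t ht
        exact geq_mono (hx t ht) hxy
      choose b f hbf using fun φ i => upClosed_nnreal_geq (D φ i) (hDup φ i)
      have h3 : ∀ φ : Fin k → Fin d,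
          (⋂ t, {v : Fin d → ℝ≥0 | geq (e t (φ t)) (v (φ t)) (a t (φ t))})
            = Sae (b φ) (f φ) := by
        intro φ
        ext v
        simp only [Set.mem_iInter, Set.mem_setOf_eq, Sae]
        constructor
        · intro h i
          refine (hbf φ i (v i)).mp ?_
          intro t ht
          subst ht
          exact h t
        · intro h t
          exact ((hbf φ (φ t) (v (φ t))).mpr (h (φ t))) t rfl
      have h4 : I = ⨆ φ : Fin k → Fin d, Iideal A (b φ) (f φ) := by
        rw [h1, h2]
        simp_rw [h3, Iideal_eq]
        exact (idealOf_iSup A fun φ => Sae (b φ) (f φ)).symm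
      set σ := (Fintype.equivFin (Fin k → Fin d)).symm with hσ
      refine ⟨Fintype.card (Fin k → Fin d), fun j => b (σ j), fun j => f (σ j), ?_⟩
      rw [h4]
      exact (Equiv.iSup_comp (g := fun φ => Iideal A (b φ) (f φ)) σ).symm
  · rintro ⟨k, a, e, hIeq⟩
    have h1 : I = idealOf A (⋃ t, Sae (a t) (e t)) := by
      rw [hIeq]
      simp_rw [Iideal_eq]
      exact idealOf_iSup A fun t => Sae (a t) (e t)
    have h2 : (⋃ t, Sae (a t) (e t)) =
        ⋂ φ : Fin k → Fin d, ⋃ t,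
          {v : Fin d → ℝ≥0 | geq (e t (φ t)) (v (φ t)) (a t (φ t))} := by
      rw [← iUnion_iInter_distrib' (fun t i => {v : Fin d → ℝ≥0 | geq (e t i) (v i) (a t i)})]
      refine Set.iUnion_congr fun t => ?_
      ext v
      simp only [Sae, Set.mem_setOf_eq, Set.mem_iInter]
    set D : (Fin k → Fin d) → Fin d → Set ℝ≥0 :=
      fun φ i => {s | ∃ t, φ t = i ∧ geq (e t i) s (a t i)} with hD
    have hDup : ∀ φ i, ∀ ⦃x y : ℝ≥0⦄, x ≤ y → x ∈ D φ i → y ∈ D φ i := by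
      rintro φ i x y hxy ⟨t, ht, hx⟩
      exact ⟨t, ht, geq_mono hx hxy⟩
    choose b f hbf using fun φ i => upClosed_nnreal_geq (D φ i) (hDup φ i)
    have h3 : ∀ φ : Fin k → Fin d,
        (⋃ t, {v : Fin d → ℝ≥0 | geq (e t (φ t)) (v (φ t)) (a t (φ t))})
          = Tae (b φ) (f φ) := by
      intro φ
      ext v
      simp only [Set.mem_iUnion, Set.mem_setOf_eq, Tae]
      constructor
      · rintro ⟨t, ht⟩
        exact ⟨φ t, (hbf φ (φ t) (v (φ t))).mp ⟨t, rfl, ht⟩⟩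
      · rintro ⟨i, hi⟩
        obtain ⟨t, ht, h⟩ := (hbf φ i (v i)).mpr hi
        subst ht
        exact ⟨t, h⟩
    set σ := (Fintype.equivFin (Fin k → Fin d)).symm with hσ
    refine ⟨Fintype.card (Fin k → Fin d), fun j => Jideal A (b (σ j)) (f (σ j)),
      fun j => (isMonomialIdeal_iff A).mpr ⟨Tae (b (σ j)) (f (σ j)), upClosed_Tae _ _,
        Jideal_eq A _ _⟩,
      fun j => mirred_Jideal A _ _, ?_⟩
    have h4 : I = ⨅ φ : Fin k → Fin d, Jideal A (b φ) (f φ) := by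
      rw [h1, h2]
      simp_rw [h3, Jideal_eq]
      exact (idealOf_iInf A (fun φ => Tae (b φ) (f φ)) (fun φ => upClosed_Tae _ _)).symm
    rw [h4]
    exact (Equiv.iInf_comp (g := fun φ => Jideal A (b φ) (f φ)) σ).symm
end

section
/- Every monomial ideal I of A[ℝ≥0^d] equals the (possibly infinite) intersection ⋂ J_{r,1} taken over all monomials X^r ∉ I, where J_{r,1} = ({X_i^{s} : 1≤i≤d, s > r_i})R; in particular every monomial ideal admits a (possibly infinite) m-irreducible decomposition. -/
open scoped NNReal ENNReal

section Aux

variable {A : Type*} [CommRing A] {d : ℕ}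

/-- Membership of an element of the semigroup ring in a monomial ideal, in terms of supports. -/
lemma mem_span_mono {E : Set (Fin d → ℝ≥0)} {f : SemiRng A d} :
    f ∈ Ideal.span (mono A '' E) ↔ ∀ u ∈ f.coeff.support, ∃ e ∈ E, e ≤ u := by
  classical
  constructor
  · intro hf
    refine Submodule.span_induction ?_ ?_ ?_ ?_ hf
    · rintro x ⟨e, he, rfl⟩ u hu
      have : u = e := Finset.mem_singleton.mp (Finsupp.support_single_subset hu)
      exact ⟨e, he, this ▸ le_refl u⟩
    · intro u hu
      simp at hu
    · intro x y _ _ hx hy u hu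
      rcases Finset.mem_union.mp (Finsupp.support_add hu) with h | h
      · exact hx u h
      · exact hy u h
    · intro a x _ hx u hu
      rw [smul_eq_mul] at hu
      obtain ⟨b, hb, c, hc, rfl⟩ := Finset.mem_add.mp (AddMonoidAlgebra.support_coeff_mul_subset a x hu)
      obtain ⟨e, he, hle⟩ := hx c hc
      exact ⟨e, he, hle.trans le_add_self⟩
  · intro h
    have hf : f = ∑ u ∈ f.coeff.support, AddMonoidAlgebra.single u (f.coeff u) :=
      (AddMonoidAlgebra.sum_coeff_single f).symm
    rw [hf]
    refine Submodule.sum_mem _ fun u hu => ?_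
    obtain ⟨e, he, hle⟩ := h u hu
    obtain ⟨s, rfl⟩ := le_iff_exists_add.mp hle
    have key : (AddMonoidAlgebra.single (e + s) (f.coeff (e + s)) : SemiRng A d)
        = AddMonoidAlgebra.single s (f.coeff (e + s)) * mono A e := by
      rw [mono, AddMonoidAlgebra.single_mul_single, mul_one, add_comm]
    rw [key]
    exact Ideal.mul_mem_left _ _ (Ideal.subset_span ⟨e, he, rfl⟩)

lemma support_mono [Nontrivial A] (a : Fin d → ℝ≥0) :
    (mono A a).coeff.support = {a} :=
  Finsupp.support_single_ne_zero a one_ne_zero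

/-- Membership of a monomial in a monomial ideal. -/
lemma mono_mem_iff [Nontrivial A] {E : Set (Fin d → ℝ≥0)} {u : Fin d → ℝ≥0} :
    mono A u ∈ Ideal.span (mono A '' E) ↔ ∃ e ∈ E, e ≤ u := by
  rw [mem_span_mono]
  constructor
  · intro h
    exact h u (by rw [support_mono]; exact Finset.mem_singleton_self u)
  · intro h v hv
    rw [support_mono] at hv
    rwa [Finset.mem_singleton.mp hv]

/-- `J_{r,1}` is the monomial ideal on the exponent set of pure powers above `r`. -/
lemma Jideal_eq_s19 (r : Fin d → ℝ≥0) :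
    Jideal A (fun i => (r i : ℝ≥0∞)) (fun _ => true) =
      Ideal.span (mono A '' {u | ∃ i s, r i < s ∧ u = Pi.single i s}) := by
  unfold Jideal
  congr 1
  ext f
  constructor
  · rintro ⟨i, s, hs, rfl⟩
    simp only [geq, if_true, ENNReal.coe_lt_coe] at hs
    exact ⟨Pi.single i s, ⟨i, s, hs, rfl⟩, rfl⟩
  · rintro ⟨u, ⟨i, s, hs, rfl⟩, rfl⟩
    exact ⟨i, s, by simp only [geq, if_true, ENNReal.coe_lt_coe]; exact hs, rfl⟩

/-- Monomial membership in `J_{r,1}`. -/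
lemma mono_mem_J [Nontrivial A] (r u : Fin d → ℝ≥0) :
    mono A u ∈ Jideal A (fun i => (r i : ℝ≥0∞)) (fun _ => true) ↔ ∃ i, r i < u i := by
  rw [Jideal_eq_s19, mono_mem_iff]
  constructor
  · rintro ⟨e, ⟨i, s, hs, rfl⟩, hle⟩
    have : s ≤ u i := by simpa using hle i
    exact ⟨i, hs.trans_le this⟩
  · rintro ⟨i, hi⟩
    refine ⟨Pi.single i (u i), ⟨i, u i, hi, rfl⟩, fun j => ?_⟩
    rcases eq_or_ne j i with rfl | h
    · simp
    · simp [Pi.single_eq_of_ne h]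

end Aux

variable {A : Type*} [CommRing A] [Nontrivial A] {d : ℕ}

theorem stmt19 (I : Ideal (SemiRng A d)) (hI : IsMonomialIdeal I) :
    I = (⨅ (r : Fin d → ℝ≥0) (_ : mono A r ∉ I),
          Jideal A (fun i => (r i : ℝ≥0∞)) (fun _ => true)) ∧
      ∀ r : Fin d → ℝ≥0,
        MIrred (Jideal A (fun i => (r i : ℝ≥0∞)) (fun _ => true)) := by
  obtain ⟨E, hE⟩ := hI
  constructor
  · refine le_antisymm ?_ ?_
    · refine le_iInf fun r => le_iInf fun hr => ?_
      rw [hE]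
      refine Ideal.span_le.mpr ?_
      rintro x ⟨e, he, rfl⟩
      refine (mono_mem_J r e).mpr ?_
      by_contra h
      push_neg at h
      exact hr (hE ▸ mono_mem_iff.mpr ⟨e, he, h⟩)
    · intro f hf
      rw [hE, mem_span_mono]
      intro u hu
      by_contra hcon
      push_neg at hcon
      have hnot : mono A u ∉ I := by
        rw [hE]
        intro h
        obtain ⟨e, he, hle⟩ := mono_mem_iff.mp h
        exact hcon e he hle
      have hfJ : f ∈ Jideal A (fun i => (u i : ℝ≥0∞)) (fun _ => true) := by
        simp only [Submodule.mem_iInf] at hf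
        exact hf u hnot
      rw [Jideal_eq_s19, mem_span_mono] at hfJ
      obtain ⟨e, ⟨i, s, hs, rfl⟩, hle⟩ := hfJ u hu
      have : s ≤ u i := by simpa using hle i
      exact absurd (hs.trans_le this) (lt_irrefl _)
  · rintro r J1 J2 ⟨E1, hE1⟩ ⟨E2, hE2⟩ heq
    by_contra hcon
    push_neg at hcon
    obtain ⟨h1, h2⟩ := hcon
    set J := Jideal A (fun i => (r i : ℝ≥0∞)) (fun _ => true) with hJ
    have hle1 : J ≤ J1 := heq ▸ inf_le_left
    have hle2 : J ≤ J2 := heq ▸ inf_le_right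
    have hex1 : ∃ e ∈ E1, mono A e ∉ J := by
      by_contra h
      push_neg at h
      refine h1 (le_antisymm hle1 ?_)
      rw [hE1]
      refine Ideal.span_le.mpr ?_
      rintro x ⟨e, he, rfl⟩
      exact h e he
    have hex2 : ∃ e ∈ E2, mono A e ∉ J := by
      by_contra h
      push_neg at h
      refine h2 (le_antisymm hle2 ?_)
      rw [hE2]
      refine Ideal.span_le.mpr ?_
      rintro x ⟨e, he, rfl⟩
      exact h e he
    obtain ⟨e1, he1, hne1⟩ := hex1
    obtain ⟨e2, he2, hne2⟩ := hex2
    have hr1 : ∀ i, e1 i ≤ r i := by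
      intro i
      by_contra h
      exact hne1 ((mono_mem_J r e1).mpr ⟨i, lt_of_not_ge h⟩)
    have hr2 : ∀ i, e2 i ≤ r i := by
      intro i
      by_contra h
      exact hne2 ((mono_mem_J r e2).mpr ⟨i, lt_of_not_ge h⟩)
    have hu1 : mono A (e1 ⊔ e2) ∈ J1 := by
      rw [hE1]; exact mono_mem_iff.mpr ⟨e1, he1, le_sup_left⟩
    have hu2 : mono A (e1 ⊔ e2) ∈ J2 := by
      rw [hE2]; exact mono_mem_iff.mpr ⟨e2, he2, le_sup_right⟩
    have hmem : mono A (e1 ⊔ e2) ∈ J := by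
      rw [heq]; exact Submodule.mem_inf.mpr ⟨hu1, hu2⟩
    obtain ⟨i, hi⟩ := (mono_mem_J r (e1 ⊔ e2)).mp hmem
    have : (e1 ⊔ e2) i ≤ r i := sup_le (hr1 i) (hr2 i)
    exact absurd hi (not_lt.mpr this)
end
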